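/- Let X be a Hilbert space and consider the discrete-time system v_t = h_t(v_{<t}) + u_t for t ∈ [T], where h_t : X^{t−1} → X is measurable (h_1 constant) and u_t ∈ X is a control term; let φ_{≤T} : X^T → X^T be the map sending the control sequence u_{≤T} = (u_1,…,u_T) to the state sequence v_{≤T} = (v_1,…,v_T). If Lip(h_t) ≤ L for all t ∈ [T], then φ_{≤T} is Lipschitz continuous with Lip(φ_{≤T}) ≤ √T (1 + L)^{T−1}. -/

import Mathlib

open Finset

noncomputable section

/-- ℓ² norm of a finite tuple of Hilbert-space vectors. -/
def l2norm {X : Type*} [NormedAddCommGroup X] {k : ℕ} (v : Fin k → X) : ℝ :=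
  Real.sqrt (∑ s, ‖v s‖ ^ 2)

/-- The state sequence of the discrete-time system `v_t = h_t(v_{<t}) + u_t`, as a function
`φ_{≤T}` of the control sequence `u`. -/
def phiSeq {X : Type*} [NormedAddCommGroup X] {T : ℕ}
    (h : ∀ t : Fin T, (Fin t.1 → X) → X) (u : Fin T → X) : Fin T → X :=
  fun t => h t (fun s => phiSeq h u ⟨s.1, s.2.trans t.isLt⟩) + u t
termination_by t => t.1
decreasing_by exact s.2

lemma sum_filter_lt_eq {T n : ℕ} (hn : n ≤ T) (g : Fin T → ℝ) :
    ∑ s ∈ Finset.univ.filter (fun s : Fin T => s.1 < n), g s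
      = ∑ s : Fin n, g ⟨s.1, s.2.trans_le hn⟩ := by
  refine Finset.sum_bij' (fun s hs => (⟨s.1, (Finset.mem_filter.mp hs).2⟩ : Fin n))
    (fun s _ => (⟨s.1, s.2.trans_le hn⟩ : Fin T)) ?_ ?_ ?_ ?_ ?_ <;> simp

lemma ineq_aux (L x e d A B c : ℝ) (hL : 0 ≤ L) (hx : 0 ≤ x) (he : 0 ≤ e) (hd : 0 ≤ d)
    (hxA : x ^ 2 = A) (hAB : A ≤ c ^ 2 * B) (hB : 0 ≤ B) (hc : 1 ≤ c)
    (hk : d ≤ L * x + e) :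
    A + d ^ 2 ≤ ((1 + L) * c) ^ 2 * (B + e ^ 2) := by
  have h1 : d ^ 2 ≤ (L * x + e) ^ 2 := by nlinarith [mul_nonneg hL hx]
  have h2 : x ^ 2 + (L * x + e) ^ 2 ≤ (1 + L) ^ 2 * (x ^ 2 + e ^ 2) := by
    nlinarith [mul_nonneg hL (sq_nonneg (x - e)), mul_nonneg (mul_nonneg hL hL) (sq_nonneg e)]
  have hc2 : (1 : ℝ) ≤ c ^ 2 := one_le_pow₀ hc
  have h3 : A + e ^ 2 ≤ c ^ 2 * (B + e ^ 2) := by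
    nlinarith [mul_le_mul_of_nonneg_right hc2 (sq_nonneg e)]
  have h4 : (1 + L) ^ 2 * (A + e ^ 2) ≤ (1 + L) ^ 2 * (c ^ 2 * (B + e ^ 2)) :=
    mul_le_mul_of_nonneg_left h3 (sq_nonneg _)
  nlinarith [h1, h2, h4]

/-- **Stability of discrete-time systems** (Lemma 19). If every `h_t` is `L`-Lipschitz (with
respect to the ℓ² norms on products), then the control-to-state map `φ_{≤T}` is Lipschitz with
constant at most `√T (1 + L)^{T−1}`. -/
theorem control_to_state_lipschitz {X : Type*} [NormedAddCommGroup X]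
    [InnerProductSpace ℝ X] [CompleteSpace X] {T : ℕ}
    (h : ∀ t : Fin T, (Fin t.1 → X) → X) (L : ℝ) (hL : 0 ≤ L)
    (hLip : ∀ t : Fin T, ∀ a b : Fin t.1 → X, ‖h t a - h t b‖ ≤ L * l2norm (a - b)) :
    ∀ u u' : Fin T → X,
      l2norm (phiSeq h u - phiSeq h u') ≤
        Real.sqrt T * (1 + L) ^ (T - 1) * l2norm (u - u') := by
  intro u u'
  set A : ℕ → ℝ := fun n => ∑ s ∈ Finset.univ.filter (fun s : Fin T => s.1 < n),
    ‖phiSeq h u s - phiSeq h u' s‖ ^ 2 with hAdef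
  set B : ℕ → ℝ := fun n => ∑ s ∈ Finset.univ.filter (fun s : Fin T => s.1 < n),
    ‖u s - u' s‖ ^ 2 with hBdef
  have hA0 : ∀ n, 0 ≤ A n := fun n => Finset.sum_nonneg fun _ _ => sq_nonneg _
  have hB0 : ∀ n, 0 ≤ B n := fun n => Finset.sum_nonneg fun _ _ => sq_nonneg _
  have hzero : A 0 = 0 ∧ B 0 = 0 := by
    constructor <;> · simp [hAdef, hBdef]
  have hsplitA : ∀ n, (hn : n < T) →
      A (n + 1) = A n + ‖phiSeq h u ⟨n, hn⟩ - phiSeq h u' ⟨n, hn⟩‖ ^ 2 := by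
    intro n hn
    rw [hAdef]
    simp only
    rw [sum_filter_lt_eq hn (fun s => ‖phiSeq h u s - phiSeq h u' s‖ ^ 2),
      sum_filter_lt_eq hn.le (fun s => ‖phiSeq h u s - phiSeq h u' s‖ ^ 2),
      Fin.sum_univ_castSucc]
    rfl
  have hsplitB : ∀ n, (hn : n < T) →
      B (n + 1) = B n + ‖u ⟨n, hn⟩ - u' ⟨n, hn⟩‖ ^ 2 := by
    intro n hn
    rw [hBdef]
    simp only
    rw [sum_filter_lt_eq hn (fun s => ‖u s - u' s‖ ^ 2),
      sum_filter_lt_eq hn.le (fun s => ‖u s - u' s‖ ^ 2),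
      Fin.sum_univ_castSucc]
    rfl
  have hconst : ∀ n, T ≤ n → (A (n + 1) = A n ∧ B (n + 1) = B n) := by
    intro n hn
    have hfe : Finset.univ.filter (fun s : Fin T => s.1 < n + 1)
        = Finset.univ.filter (fun s : Fin T => s.1 < n) := by
      apply Finset.filter_congr
      intro s _
      exact ⟨fun _ => s.2.trans_le hn, fun hs => hs.trans (Nat.lt_succ_self n)⟩
    constructor
    · rw [hAdef]; simp only; rw [hfe]
    · rw [hBdef]; simp only; rw [hfe]
  have key : ∀ n, (hn : n < T) →
      ‖phiSeq h u ⟨n, hn⟩ - phiSeq h u' ⟨n, hn⟩‖ ≤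
        L * Real.sqrt (A n) + ‖u ⟨n, hn⟩ - u' ⟨n, hn⟩‖ := by
    intro n hn
    set t : Fin T := ⟨n, hn⟩
    set a : Fin t.1 → X := fun s => phiSeq h u ⟨s.1, s.2.trans t.isLt⟩ with ha
    set b : Fin t.1 → X := fun s => phiSeq h u' ⟨s.1, s.2.trans t.isLt⟩ with hb
    have e1 : phiSeq h u t = h t a + u t := by rw [phiSeq]
    have e2 : phiSeq h u' t = h t b + u' t := by rw [phiSeq]
    have hnorm : l2norm (a - b) = Real.sqrt (A n) := by
      unfold l2norm
      congr 1
      rw [hAdef]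
      simp only
      rw [sum_filter_lt_eq hn.le (fun s => ‖phiSeq h u s - phiSeq h u' s‖ ^ 2)]
      rfl
    calc ‖phiSeq h u t - phiSeq h u' t‖
        = ‖(h t a - h t b) + (u t - u' t)‖ := by rw [e1, e2]; congr 1; abel
      _ ≤ ‖h t a - h t b‖ + ‖u t - u' t‖ := norm_add_le _ _
      _ ≤ L * l2norm (a - b) + ‖u t - u' t‖ := add_le_add_left (hLip t a b) _
      _ = L * Real.sqrt (A n) + ‖u t - u' t‖ := by rw [hnorm]
  have main : ∀ n, A n ≤ ((1 + L) ^ (n - 1)) ^ 2 * B n := by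
    intro n
    induction n with
    | zero => simp [hzero.1, hzero.2]
    | succ n ih =>
      by_cases hn : n < T
      · have hsA := hsplitA n hn
        have hsB := hsplitB n hn
        have hk := key n hn
        set d := ‖phiSeq h u ⟨n, hn⟩ - phiSeq h u' ⟨n, hn⟩‖ with hd
        set e := ‖u ⟨n, hn⟩ - u' ⟨n, hn⟩‖ with he
        have hd0 : 0 ≤ d := norm_nonneg _
        have he0 : 0 ≤ e := norm_nonneg _
        have hx0 : 0 ≤ Real.sqrt (A n) := Real.sqrt_nonneg _
        have hx2 : Real.sqrt (A n) ^ 2 = A n := Real.sq_sqrt (hA0 n)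
        match n, hn, hsA, hsB, hk, hx0, hx2, ih with
        | 0, hn, hsA, hsB, hk, hx0, hx2, ih =>
          have hA0' : A 0 = 0 := hzero.1
          have hs0 : Real.sqrt (A 0) = 0 := by rw [hA0']; exact Real.sqrt_zero
          rw [hs0, mul_zero, zero_add] at hk
          rw [hsA, hsB, hA0', hzero.2]
          simp only [Nat.sub_self, pow_zero, one_pow, one_mul, zero_add]
          exact pow_le_pow_left₀ hd0 hk 2
        | (m + 1), hn, hsA, hsB, hk, hx0, hx2, ih =>
          have hexp : ((1 + L) ^ (m + 1 + 1 - 1)) = (1 + L) * (1 + L) ^ (m + 1 - 1) := by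
            simp only [Nat.add_sub_cancel]
            rw [pow_succ]; ring
          have hc1 : (1 : ℝ) ≤ (1 + L) ^ (m + 1 - 1) := one_le_pow₀ (by linarith)
          rw [hsA, hsB, hexp]
          exact ineq_aux L (Real.sqrt (A (m + 1))) e d (A (m + 1)) (B (m + 1)) _
            hL hx0 he0 hd0 hx2 ih (hB0 _) hc1 hk
      · have hTn : T ≤ n := le_of_not_gt hn
        have hc := hconst n hTn
        rw [hc.1, hc.2]
        refine ih.trans (mul_le_mul_of_nonneg_right ?_ (hB0 n))
        apply pow_le_pow_left₀ (by positivity)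
        exact pow_le_pow_right₀ (by linarith) (by omega)
  rcases Nat.eq_zero_or_pos T with hT | hT
  · subst hT
    simp [l2norm]
  · have hfull : ∀ (w w' : Fin T → X),
        (∑ s, ‖(w - w') s‖ ^ 2) = ∑ s ∈ Finset.univ.filter (fun s : Fin T => s.1 < T),
          ‖w s - w' s‖ ^ 2 := by
      intro w w'
      rw [Finset.filter_true_of_mem (fun s _ => s.2)]
      rfl
    have hlhs : l2norm (phiSeq h u - phiSeq h u') = Real.sqrt (A T) := by
      unfold l2norm; rw [hfull]
    have hrhs : l2norm (u - u') = Real.sqrt (B T) := by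
      unfold l2norm; rw [hfull]
    rw [hlhs, hrhs]
    have h1 : Real.sqrt (A T) ≤ (1 + L) ^ (T - 1) * Real.sqrt (B T) := by
      have := Real.sqrt_le_sqrt (main T)
      rwa [Real.sqrt_mul (sq_nonneg _), Real.sqrt_sq (by positivity)] at this
    have h2 : (1 : ℝ) ≤ Real.sqrt T := by
      rw [show (1:ℝ) = Real.sqrt 1 by simp]
      exact Real.sqrt_le_sqrt (by exact_mod_cast hT)
    have h3 : 0 ≤ (1 + L) ^ (T - 1) * Real.sqrt (B T) := by positivity
    calc Real.sqrt (A T) ≤ (1 + L) ^ (T - 1) * Real.sqrt (B T) := h1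
      _ ≤ Real.sqrt T * ((1 + L) ^ (T - 1) * Real.sqrt (B T)) := le_mul_of_one_le_left h3 h2
      _ = Real.sqrt T * (1 + L) ^ (T - 1) * Real.sqrt (B T) := by ring


end
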